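/- Let D be the complete graph K_{2d+1} with arcs oriented along an Eulerian circuit (so every vertex has outdegree and indegree exactly d). Then for every bipartition V(D) = V1 ∪ V2, the number of arcs directed from V1 to V2 is at most d(d+1)/2. -/

import Mathlib

open Finset

def arcs {V : Type*} [DecidableEq V] (A : V → V → Prop) [DecidableRel A]
    (X Y : Finset V) : ℕ :=
  ((X ×ˢ Y).filter (fun p => A p.1 p.2)).card

def outdeg {V : Type*} [Fintype V] (A : V → V → Prop) [DecidableRel A] (v : V) : ℕ :=
  (Finset.univ.filter (fun w => A v w)).card

lemma arcs_eq_sum {V : Type*} [DecidableEq V] (A : V → V → Prop) [DecidableRel A]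
    (X Y : Finset V) : arcs A X Y = ∑ x ∈ X, (Y.filter (fun y => A x y)).card := by
  unfold arcs
  rw [Finset.card_filter, Finset.sum_product]
  exact Finset.sum_congr rfl fun x _ => (Finset.card_filter _ _).symm

/-- For any orientation of `K_{2d+1}` in which every vertex has outdegree `d`,
every bipartition `V1 ∪ V2` has at most `d(d+1)/2` arcs from `V1` to `V2`. -/
theorem stmt2 {V : Type*} [Fintype V] [DecidableEq V] (d : ℕ)
    (hV : Fintype.card V = 2 * d + 1)
    (A : V → V → Prop) [DecidableRel A]
    (hloop : ∀ v, ¬ A v v)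
    (htour : ∀ u v : V, u ≠ v → (A u v ↔ ¬ A v u))
    (hdeg : ∀ v, outdeg A v = d) :
    ∀ V1 : Finset V, arcs A V1 V1ᶜ ≤ d * (d + 1) / 2 := by
  intro V1
  set k := V1.card with hk
  -- split out-arcs from V1
  have hsplit : arcs A V1 V1 + arcs A V1 V1ᶜ = k * d := by
    rw [arcs_eq_sum, arcs_eq_sum, ← Finset.sum_add_distrib]
    have : ∀ x ∈ V1, (V1.filter (fun y => A x y)).card
        + (V1ᶜ.filter (fun y => A x y)).card = d := by
      intro x _
      rw [← Finset.card_union_of_disjoint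
        (Finset.disjoint_filter_filter disjoint_compl_right)]
      rw [← Finset.filter_union, Finset.union_compl]
      exact hdeg x
    rw [Finset.sum_congr rfl this, Finset.sum_const, smul_eq_mul]
  -- arcs within V1: double counting via the offDiag
  have hin : 2 * arcs A V1 V1 + k = k * k := by
    have hfe : (V1 ×ˢ V1).filter (fun p => A p.1 p.2)
        = V1.offDiag.filter (fun p => A p.1 p.2) := by
      rw [show V1.offDiag = (V1 ×ˢ V1).filter (fun a => a.1 ≠ a.2) from by ext; simp [Finset.mem_offDiag, and_assoc], Finset.filter_filter]
      apply Finset.filter_congr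
      intro p _
      constructor
      · intro h
        refine ⟨fun he => hloop p.1 ?_, h⟩
        rwa [← he] at h
      · exact And.right
    have hb : (V1.offDiag.filter (fun p => A p.1 p.2)).card
        = (V1.offDiag.filter (fun p => ¬ A p.1 p.2)).card := by
      apply Finset.card_bij (fun p _ => (p.2, p.1))
      · intro p hp
        simp only [Finset.mem_filter, Finset.mem_offDiag] at hp ⊢
        obtain ⟨⟨h1, h2, hne⟩, hA⟩ := hp
        refine ⟨⟨h2, h1, fun he => hne he.symm⟩, ?_⟩
        intro hA'
        exact ((htour p.2 p.1 (fun he => hne he.symm)).mp hA') hA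
      · intro p hp q hq h
        simp only [Prod.mk.injEq] at h
        exact Prod.ext h.2 h.1
      · intro p hp
        simp only [Finset.mem_filter, Finset.mem_offDiag] at hp
        obtain ⟨⟨h1, h2, hne⟩, hA⟩ := hp
        refine ⟨(p.2, p.1), ?_, rfl⟩
        simp only [Finset.mem_filter, Finset.mem_offDiag]
        refine ⟨⟨h2, h1, fun he => hne he.symm⟩, ?_⟩
        by_contra hA'
        exact hA ((htour p.1 p.2 hne).mpr hA')
    have htot := Finset.card_filter_add_card_filter_not
      (s := V1.offDiag) (p := fun p => A p.1 p.2)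
    rw [Finset.offDiag_card, ← hk] at htot
    have hle : k ≤ k * k := by nlinarith
    unfold arcs
    rw [hfe]
    omega
  -- k ≤ 2d+1
  have hkle : k ≤ 2 * d + 1 := hV ▸ Finset.card_le_univ V1
  -- key inequality
  have hkey : 2 * (k * d) + k ≤ d * (d + 1) + k * k := by
    have hd : (0:ℤ) ≤ (d:ℤ) := Int.ofNat_nonneg d
    rcases le_or_gt k d with h | h
    · have h' : (k:ℤ) ≤ d := by exact_mod_cast h
      have := mul_nonneg (by linarith : (0:ℤ) ≤ (d:ℤ) - k)
        (by linarith : (0:ℤ) ≤ (d:ℤ) + 1 - k)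
      zify; nlinarith
    · have h' : (d:ℤ) + 1 ≤ k := by exact_mod_cast h
      have := mul_nonneg (by linarith : (0:ℤ) ≤ (k:ℤ) - d)
        (by linarith : (0:ℤ) ≤ (k:ℤ) - d - 1)
      zify; nlinarith
  have h2m : 2 * arcs A V1 V1ᶜ ≤ d * (d + 1) := by linarith
  rw [Nat.le_div_iff_mul_le (by norm_num : 0 < 2)]
  linarith
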